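/- Let (Θ, F, π) be a probability space, C₁, C₂ > 0, and let f₁, g₁, g₂ : Θ → ℝ be measurable with |f₁| ≤ C₁, |g₁| ≤ C₂, |g₂| ≤ C₂ pointwise. Then for any real coefficients γ₁, γ₂ with |γ₁| ≤ 1 and |γ₂| ≤ 1: |γ₁ ∫ f₁·g₁ dπ + γ₂ ∫ f₁·g₂ dπ| ≤ C₁·C₂ + γ₁·γ₂·(C₁/C₂)·∫ g₁·g₂ dπ. -/

import Mathlib

open MeasureTheory

lemma loubenets_integ {Θ : Type*} [MeasurableSpace Θ]
    (π : Measure Θ) [IsProbabilityMeasure π] (f : Θ → ℝ) (C : ℝ)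
    (hm : Measurable f) (hb : ∀ θ, |f θ| ≤ C) : Integrable f π :=
  ⟨hm.aestronglyMeasurable,
    HasFiniteIntegral.of_bounded (C := C) (ae_of_all _ fun θ => by simpa using hb θ)⟩

theorem loubenets_lemma1 {Θ : Type*} [MeasurableSpace Θ]
    (π : Measure Θ) [IsProbabilityMeasure π]
    (C₁ C₂ : ℝ) (hC₁ : 0 < C₁) (hC₂ : 0 < C₂)
    (f₁ g₁ g₂ : Θ → ℝ)
    (hf₁m : Measurable f₁) (hg₁m : Measurable g₁) (hg₂m : Measurable g₂)
    (hf₁ : ∀ θ, |f₁ θ| ≤ C₁) (hg₁ : ∀ θ, |g₁ θ| ≤ C₂) (hg₂ : ∀ θ, |g₂ θ| ≤ C₂)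
    (γ₁ γ₂ : ℝ) (hγ₁ : |γ₁| ≤ 1) (hγ₂ : |γ₂| ≤ 1) :
    |γ₁ * ∫ θ, f₁ θ * g₁ θ ∂π + γ₂ * ∫ θ, f₁ θ * g₂ θ ∂π| ≤
      C₁ * C₂ + γ₁ * γ₂ * (C₁ / C₂) * ∫ θ, g₁ θ * g₂ θ ∂π := by
  have hfg₁ : Integrable (fun θ => f₁ θ * g₁ θ) π :=
    loubenets_integ π _ (C₁ * C₂) (hf₁m.mul hg₁m) (fun θ => by
      rw [abs_mul]
      exact mul_le_mul (hf₁ θ) (hg₁ θ) (abs_nonneg _) hC₁.le)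
  have hfg₂ : Integrable (fun θ => f₁ θ * g₂ θ) π :=
    loubenets_integ π _ (C₁ * C₂) (hf₁m.mul hg₂m) (fun θ => by
      rw [abs_mul]
      exact mul_le_mul (hf₁ θ) (hg₂ θ) (abs_nonneg _) hC₁.le)
  have hgg : Integrable (fun θ => g₁ θ * g₂ θ) π :=
    loubenets_integ π _ (C₂ * C₂) (hg₁m.mul hg₂m) (fun θ => by
      rw [abs_mul]
      exact mul_le_mul (hg₁ θ) (hg₂ θ) (abs_nonneg _) hC₂.le)
  -- pointwise bound
  have key : ∀ θ, |f₁ θ * (γ₁ * g₁ θ + γ₂ * g₂ θ)| ≤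
      C₁ * C₂ + γ₁ * γ₂ * (C₁ / C₂) * (g₁ θ * g₂ θ) := by
    intro θ
    have h1 : |γ₁ * g₁ θ| ≤ C₂ := by
      rw [abs_mul]
      calc |γ₁| * |g₁ θ| ≤ 1 * C₂ := mul_le_mul hγ₁ (hg₁ θ) (abs_nonneg _) zero_le_one
        _ = C₂ := one_mul _
    have h2 : |γ₂ * g₂ θ| ≤ C₂ := by
      rw [abs_mul]
      calc |γ₂| * |g₂ θ| ≤ 1 * C₂ := mul_le_mul hγ₂ (hg₂ θ) (abs_nonneg _) zero_le_one
        _ = C₂ := one_mul _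
    have habs : |γ₁ * g₁ θ + γ₂ * g₂ θ| ≤ C₂ + γ₁ * γ₂ * (g₁ θ * g₂ θ) / C₂ := by
      rw [abs_le] at h1 h2 ⊢
      have hd : γ₁ * γ₂ * (g₁ θ * g₂ θ) / C₂ * C₂ = γ₁ * γ₂ * (g₁ θ * g₂ θ) :=
        div_mul_cancel₀ _ hC₂.ne'
      constructor
      · have := mul_nonneg (by linarith [h1.1] : (0:ℝ) ≤ C₂ + γ₁ * g₁ θ)
          (by linarith [h2.1] : (0:ℝ) ≤ C₂ + γ₂ * g₂ θ)
        nlinarith [this, hd, hC₂]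
      · have := mul_nonneg (by linarith [h1.2] : (0:ℝ) ≤ C₂ - γ₁ * g₁ θ)
          (by linarith [h2.2] : (0:ℝ) ≤ C₂ - γ₂ * g₂ θ)
        nlinarith [this, hd, hC₂]
    rw [abs_mul]
    calc |f₁ θ| * |γ₁ * g₁ θ + γ₂ * g₂ θ|
        ≤ C₁ * (C₂ + γ₁ * γ₂ * (g₁ θ * g₂ θ) / C₂) :=
          mul_le_mul (hf₁ θ) habs (abs_nonneg _) hC₁.le
      _ = C₁ * C₂ + γ₁ * γ₂ * (C₁ / C₂) * (g₁ θ * g₂ θ) := by field_simp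
  have hrw : γ₁ * ∫ θ, f₁ θ * g₁ θ ∂π + γ₂ * ∫ θ, f₁ θ * g₂ θ ∂π =
      ∫ θ, f₁ θ * (γ₁ * g₁ θ + γ₂ * g₂ θ) ∂π := by
    rw [← integral_const_mul, ← integral_const_mul, ← integral_add (hfg₁.const_mul γ₁) (hfg₂.const_mul γ₂)]
    congr 1; funext θ; ring
  rw [hrw]
  have hint : Integrable (fun θ => f₁ θ * (γ₁ * g₁ θ + γ₂ * g₂ θ)) π :=
    loubenets_integ π _ (C₁ * (C₂ + C₂)) (hf₁m.mul ((hg₁m.const_mul γ₁).add (hg₂m.const_mul γ₂)))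
      (fun θ => by
        rw [abs_mul]
        refine mul_le_mul (hf₁ θ) ?_ (abs_nonneg _) hC₁.le
        calc |γ₁ * g₁ θ + γ₂ * g₂ θ| ≤ |γ₁ * g₁ θ| + |γ₂ * g₂ θ| := abs_add_le _ _
          _ ≤ C₂ + C₂ := by
            rw [abs_mul, abs_mul]
            have a1 : |γ₁| * |g₁ θ| ≤ 1 * C₂ := mul_le_mul hγ₁ (hg₁ θ) (abs_nonneg _) zero_le_one
            have a2 : |γ₂| * |g₂ θ| ≤ 1 * C₂ := mul_le_mul hγ₂ (hg₂ θ) (abs_nonneg _) zero_le_one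
            linarith)
  calc |∫ θ, f₁ θ * (γ₁ * g₁ θ + γ₂ * g₂ θ) ∂π|
      ≤ ∫ θ, |f₁ θ * (γ₁ * g₁ θ + γ₂ * g₂ θ)| ∂π := by simpa only [Real.norm_eq_abs] using norm_integral_le_integral_norm (μ := π) (fun θ => f₁ θ * (γ₁ * g₁ θ + γ₂ * g₂ θ))
    _ ≤ ∫ θ, (C₁ * C₂ + γ₁ * γ₂ * (C₁ / C₂) * (g₁ θ * g₂ θ)) ∂π := by
        refine integral_mono hint.abs ((integrable_const _).add (hgg.const_mul _)) key
    _ = C₁ * C₂ + γ₁ * γ₂ * (C₁ / C₂) * ∫ θ, g₁ θ * g₂ θ ∂π := by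
        rw [integral_add (integrable_const _) (hgg.const_mul _), integral_const,
          integral_const_mul, probReal_univ, smul_eq_mul, one_mul]
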